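/- Let v : [0,L] → [0,∞) be Lipschitz continuous, v* its non-decreasing rearrangement. If ∫₀ᴸ ∫ₛᴸ v(c) dc ds = ∫₀ᴸ ∫ₛᴸ v*(c) dc ds, then ∫ₛᴸ v(c) dc = ∫ₛᴸ v*(c) dc for all s ∈ [0,L], and hence v = v* almost everywhere — in particular v is a.e. equal to a non-decreasing function. -/

import Mathlib

open Real Set intervalIntegral MeasureTheory
open scoped ENNReal

/-- The non-decreasing rearrangement of a function `u` on the interval `[0, L]`. -/
noncomputable def ndRearr (L : ℝ) (u : ℝ → ℝ) (s : ℝ) : ℝ :=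
  sInf {c : ℝ | 0 ≤ c ∧
    (MeasureTheory.volume {t : ℝ | t ∈ Set.Icc 0 L ∧ c ≤ u t}).toReal ≤ L - s}

/-- Superlevel-measure (with strict inequality). -/
noncomputable def nuMeas (L : ℝ) (u : ℝ → ℝ) (c : ℝ) : ℝ≥0∞ :=
  MeasureTheory.volume {t : ℝ | t ∈ Set.Icc 0 L ∧ c < u t}

lemma nuMeas_ne_top (L : ℝ) (u : ℝ → ℝ) (c : ℝ) : nuMeas L u c ≠ ⊤ := by
  refine ne_top_of_le_ne_top ?_ (measure_mono (fun t ht => ht.1) :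
    nuMeas L u c ≤ volume (Set.Icc 0 L))
  simp [Real.volume_Icc]

lemma ndRearr_nonneg (L : ℝ) (u : ℝ → ℝ) (s : ℝ) : 0 ≤ ndRearr L u s :=
  Real.sInf_nonneg fun _ hx => hx.1

lemma ndRearr_bddBelow (L : ℝ) (u : ℝ → ℝ) (s : ℝ) :
    BddBelow {c : ℝ | 0 ≤ c ∧
      (MeasureTheory.volume {t : ℝ | t ∈ Set.Icc 0 L ∧ c ≤ u t}).toReal ≤ L - s} :=
  ⟨0, fun _ hx => hx.1⟩

lemma ndRearr_set_nonempty {L : ℝ} (u : ℝ → ℝ) {C s : ℝ}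
    (hC : ∀ t ∈ Set.Icc 0 L, u t ≤ C) (hs : s ≤ L) :
    Set.Nonempty {c : ℝ | 0 ≤ c ∧
      (MeasureTheory.volume {t : ℝ | t ∈ Set.Icc 0 L ∧ c ≤ u t}).toReal ≤ L - s} := by
  refine ⟨max 0 C + 1, le_add_of_nonneg_of_le (le_max_left 0 C) zero_le_one, ?_⟩
  have : {t : ℝ | t ∈ Set.Icc 0 L ∧ max 0 C + 1 ≤ u t} = ∅ := by
    ext t
    simp only [Set.mem_setOf_eq, Set.mem_empty_iff_false, iff_false, not_and, not_le]
    intro ht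
    have := hC t ht
    have : u t ≤ max 0 C := this.trans (le_max_right 0 C)
    linarith
  rw [this]
  simp; linarith

lemma ndRearr_monotoneOn {L : ℝ} {u : ℝ → ℝ} {C : ℝ}
    (hC : ∀ t ∈ Set.Icc 0 L, u t ≤ C) :
    MonotoneOn (ndRearr L u) (Set.Icc 0 L) := by
  intro s hs s' hs' hss
  refine csInf_le_csInf (ndRearr_bddBelow L u s) (ndRearr_set_nonempty u hC hs'.2) ?_
  intro c hc
  exact ⟨hc.1, hc.2.trans (by linarith)⟩

lemma ndRearr_le_iff {L : ℝ} {u : ℝ → ℝ} {C : ℝ}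
    (hC : ∀ t ∈ Set.Icc 0 L, u t ≤ C) {s c : ℝ}
    (hs : s ∈ Set.Icc 0 L) (hc : 0 ≤ c) :
    ndRearr L u s ≤ c ↔ nuMeas L u c ≤ ENNReal.ofReal (L - s) := by
  have hLs : (0:ℝ) ≤ L - s := by linarith [hs.2]
  constructor
  · intro h
    -- express the strict superlevel set as an increasing union
    have hUnion : {t : ℝ | t ∈ Set.Icc 0 L ∧ c < u t}
        = ⋃ n : ℕ, {t : ℝ | t ∈ Set.Icc 0 L ∧ c + 1/(n+1) ≤ u t} := by
      ext t
      simp only [Set.mem_setOf_eq, Set.mem_iUnion]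
      constructor
      · rintro ⟨ht, hlt⟩
        obtain ⟨n, hn⟩ := exists_nat_one_div_lt (sub_pos.2 hlt)
        exact ⟨n, ht, by push_cast at hn ⊢; linarith⟩
      · rintro ⟨n, ht, hle⟩
        refine ⟨ht, lt_of_lt_of_le ?_ hle⟩
        have : (0:ℝ) < 1/(n+1) := by positivity
        linarith
    have hmono : Monotone fun n : ℕ =>
        {t : ℝ | t ∈ Set.Icc 0 L ∧ c + 1/(n+1) ≤ u t} := by
      intro m n hmn t ht
      refine ⟨ht.1, le_trans ?_ ht.2⟩
      have h1 : (1:ℝ)/(n+1) ≤ 1/(m+1) := by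
        apply one_div_le_one_div_of_le (by positivity)
        exact_mod_cast by omega
      linarith
    rw [nuMeas, hUnion, hmono.directed_le.measure_iUnion]
    refine iSup_le fun n => ?_
    -- find an element of the defining set below `c + 1/(n+1)`
    have hpos : (0:ℝ) < 1/(n+1) := by positivity
    have hlt : ndRearr L u s < c + 1/(n+1) := lt_of_le_of_lt h (by linarith)
    obtain ⟨c', hc', hc'lt⟩ := (csInf_lt_iff (ndRearr_bddBelow L u s)
      (ndRearr_set_nonempty u hC hs.2)).1 hlt
    have hsub : {t : ℝ | t ∈ Set.Icc 0 L ∧ c + 1/(n+1) ≤ u t}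
        ⊆ {t : ℝ | t ∈ Set.Icc 0 L ∧ c' ≤ u t} :=
      fun t ht => ⟨ht.1, le_trans hc'lt.le ht.2⟩
    have hfin : volume {t : ℝ | t ∈ Set.Icc 0 L ∧ c' ≤ u t} ≠ ⊤ := by
      refine ne_top_of_le_ne_top ?_ (measure_mono (fun t ht => ht.1) :
        _ ≤ volume (Set.Icc 0 L))
      simp [Real.volume_Icc]
    calc volume {t : ℝ | t ∈ Set.Icc 0 L ∧ c + 1/(n+1) ≤ u t}
        ≤ volume {t : ℝ | t ∈ Set.Icc 0 L ∧ c' ≤ u t} := measure_mono hsub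
      _ ≤ ENNReal.ofReal (L - s) := by
          rw [← ENNReal.ofReal_toReal hfin]
          exact ENNReal.ofReal_le_ofReal hc'.2
  · intro h
    refine le_of_forall_pos_le_add fun ε hε => ?_
    refine csInf_le (ndRearr_bddBelow L u s) ⟨by linarith, ?_⟩
    have hsub : {t : ℝ | t ∈ Set.Icc 0 L ∧ c + ε ≤ u t}
        ⊆ {t : ℝ | t ∈ Set.Icc 0 L ∧ c < u t} :=
      fun t ht => ⟨ht.1, lt_of_lt_of_le (by linarith) ht.2⟩
    calc (volume {t : ℝ | t ∈ Set.Icc 0 L ∧ c + ε ≤ u t}).toReal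
        ≤ (nuMeas L u c).toReal :=
          ENNReal.toReal_mono (nuMeas_ne_top L u c) (measure_mono hsub)
      _ ≤ (ENNReal.ofReal (L - s)).toReal :=
          ENNReal.toReal_mono ENNReal.ofReal_ne_top h
      _ = L - s := ENNReal.toReal_ofReal hLs
theorem stmt_8 (L : ℝ) (hL : 0 < L) (v : ℝ → ℝ) (K : NNReal)
    (hv : LipschitzOnWith K v (Set.Icc 0 L))
    (hv0 : ∀ s ∈ Set.Icc 0 L, 0 ≤ v s)
    (heq : ∫ s in (0:ℝ)..L, (∫ c in s..L, v c)
         = ∫ s in (0:ℝ)..L, (∫ c in s..L, ndRearr L v c)) :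
    (∀ s ∈ Set.Icc 0 L, (∫ c in s..L, v c) = ∫ c in s..L, ndRearr L v c) ∧
    (∀ᵐ s ∂(MeasureTheory.volume.restrict (Set.Icc 0 L)), v s = ndRearr L v s) ∧
    (∃ w : ℝ → ℝ, MonotoneOn w (Set.Icc 0 L) ∧
      ∀ᵐ s ∂(MeasureTheory.volume.restrict (Set.Icc 0 L)), v s = w s) := by
  -- clamped version of v
  set u : ℝ → ℝ := fun t => v (min L (max 0 t)) with hu_def
  have hclamp : ∀ t, min L (max 0 t) ∈ Set.Icc 0 L :=
    fun t => ⟨le_min hL.le (le_max_left 0 t), min_le_left _ _⟩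
  have hue : ∀ t ∈ Set.Icc 0 L, u t = v t := by
    intro t ht
    simp only [hu_def, max_eq_right ht.1, min_eq_right ht.2]
  have hu : Continuous u := by
    exact hv.continuousOn.comp_continuous
      (continuous_const.min (continuous_const.max continuous_id)) hclamp
  have hu0 : ∀ t, 0 ≤ u t := fun t => hv0 _ (hclamp t)
  obtain ⟨C, hC0⟩ := isCompact_Icc.exists_bound_of_continuousOn hv.continuousOn
  have hCu : ∀ t ∈ Set.Icc 0 L, u t ≤ C := by
    intro t ht
    rw [hue t ht]
    exact (le_abs_self _).trans (hC0 t ht)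
  -- ndRearr of v equals ndRearr of u
  have hnd : ndRearr L v = ndRearr L u := by
    funext s
    unfold ndRearr
    congr 1
    ext c
    have : {t : ℝ | t ∈ Set.Icc 0 L ∧ c ≤ v t} = {t : ℝ | t ∈ Set.Icc 0 L ∧ c ≤ u t} := by
      ext t
      exact and_congr_right fun ht => by rw [hue t ht]
    simp only [Set.mem_setOf_eq, this]
  -- the monotone representative
  set w : ℝ → ℝ := fun t => ndRearr L u (min L (max 0 t)) with hw_def
  have hw_mono : Monotone w := by
    intro a b hab
    refine ndRearr_monotoneOn hCu (hclamp a) (hclamp b) ?_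
    exact min_le_min le_rfl (max_le_max le_rfl hab)
  have hw_eq : ∀ t ∈ Set.Icc 0 L, w t = ndRearr L u t := by
    intro t ht
    simp only [hw_def, max_eq_right ht.1, min_eq_right ht.2]
  have hw0 : ∀ t, 0 ≤ w t := fun t => ndRearr_nonneg L u _
  have hndv_w : ∀ t ∈ Set.Icc 0 L, ndRearr L v t = w t := by
    intro t ht
    rw [hnd, hw_eq t ht]
  -- core Hardy–Littlewood type inequality on tails (lintegral form)
  have key : ∀ s ∈ Set.Icc 0 L,
      (∫⁻ t in Set.Icc s L, ENNReal.ofReal (u t))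
        ≤ ∫⁻ t in Set.Icc s L, ENNReal.ofReal (w t) := by
    intro s hs
    rw [lintegral_eq_lintegral_meas_lt _ (Filter.Eventually.of_forall hu0)
      hu.aemeasurable.restrict,
      lintegral_eq_lintegral_meas_lt _ (Filter.Eventually.of_forall hw0)
      hw_mono.measurable.aemeasurable.restrict]
    refine lintegral_mono_ae ((ae_restrict_iff' measurableSet_Ioi).2
      (Filter.Eventually.of_forall fun c hc => ?_))
    have hc0 : (0:ℝ) ≤ c := (Set.mem_Ioi.1 hc).le
    rw [Measure.restrict_apply (measurableSet_lt measurable_const hu.measurable),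
      Measure.restrict_apply (measurableSet_lt measurable_const hw_mono.measurable)]
    set n' : ℝ := (nuMeas L u c).toReal with hn'
    have hn'0 : 0 ≤ n' := ENNReal.toReal_nonneg
    -- upper bound for the u-side
    have h1 : volume ({a : ℝ | c < u a} ∩ Set.Icc s L)
        ≤ min (ENNReal.ofReal (L - s)) (nuMeas L u c) := by
      refine le_min (le_of_le_of_eq (measure_mono Set.inter_subset_right) ?_) ?_
      · rw [Real.volume_Icc]
      · refine measure_mono fun t ht => ?_
        exact ⟨⟨hs.1.trans ht.2.1, ht.2.2⟩, ht.1⟩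
    -- lower bound for the w-side
    have h2 : Set.Ioc (max s (L - n')) L ⊆ {a : ℝ | c < w a} ∩ Set.Icc s L := by
      intro t ht
      have hts : s < t := lt_of_le_of_lt (le_max_left _ _) ht.1
      have htmem : t ∈ Set.Icc 0 L := ⟨(hs.1.trans hts.le), ht.2⟩
      refine ⟨?_, hts.le, ht.2⟩
      show c < w t
      by_contra hcon
      push_neg at hcon
      rw [hw_eq t htmem] at hcon
      have := (ndRearr_le_iff hCu htmem hc0).1 hcon
      have hLt : (0:ℝ) ≤ L - t := by linarith [ht.2]
      have : n' ≤ L - t := by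
        calc n' ≤ (ENNReal.ofReal (L - t)).toReal :=
              ENNReal.toReal_mono ENNReal.ofReal_ne_top this
          _ = L - t := ENNReal.toReal_ofReal hLt
      have : t ≤ L - n' := by linarith
      exact absurd (lt_of_le_of_lt (le_max_right s (L - n')) ht.1) (not_lt.2 this)
    have h3 : ENNReal.ofReal (L - max s (L - n'))
        ≤ volume ({a : ℝ | c < w a} ∩ Set.Icc s L) := by
      calc ENNReal.ofReal (L - max s (L - n'))
          = volume (Set.Ioc (max s (L - n')) L) := (Real.volume_Ioc).symm
        _ ≤ _ := measure_mono h2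
    refine h1.trans (le_trans ?_ h3)
    rcases le_total s (L - n') with hcase | hcase
    · rw [max_eq_right hcase]
      have : L - (L - n') = n' := by ring
      rw [this, ← ENNReal.ofReal_toReal (nuMeas_ne_top L u c)]
      exact min_le_right _ _
    · rw [max_eq_left hcase]
      exact min_le_left _ _
  -- real-valued tail integrals
  set F : ℝ → ℝ := fun s => ∫ t in s..L, u t with hF_def
  set G : ℝ → ℝ := fun s => ∫ t in s..L, w t with hG_def
  have hu_int : ∀ a b : ℝ, IntervalIntegrable u volume a b :=
    fun a b => hu.intervalIntegrable a b
  have hw_int : ∀ a b : ℝ, IntervalIntegrable w volume a b :=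
    fun a b => hw_mono.intervalIntegrable
  have hF_ofReal : ∀ s ∈ Set.Icc 0 L,
      ENNReal.ofReal (F s) = ∫⁻ t in Set.Icc s L, ENNReal.ofReal (u t) := by
    intro s hs
    rw [hF_def]
    simp only
    rw [intervalIntegral.integral_of_le hs.2,
      MeasureTheory.ofReal_integral_eq_lintegral_ofReal
        ((hu_int s L).1.mono_set (by simp [Set.uIoc_of_le hs.2]))
        (Filter.Eventually.of_forall hu0),
      Measure.restrict_congr_set Ioc_ae_eq_Icc]
  have hG_ofReal : ∀ s ∈ Set.Icc 0 L,
      ENNReal.ofReal (G s) = ∫⁻ t in Set.Icc s L, ENNReal.ofReal (w t) := by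
    intro s hs
    rw [hG_def]
    simp only
    rw [intervalIntegral.integral_of_le hs.2,
      MeasureTheory.ofReal_integral_eq_lintegral_ofReal
        ((hw_int s L).1.mono_set (by simp [Set.uIoc_of_le hs.2]))
        (Filter.Eventually.of_forall hw0),
      Measure.restrict_congr_set Ioc_ae_eq_Icc]
  have hFG : ∀ s ∈ Set.Icc 0 L, F s ≤ G s := by
    intro s hs
    have h := key s hs
    rw [← hF_ofReal s hs, ← hG_ofReal s hs] at h
    have hGnn : 0 ≤ G s := intervalIntegral.integral_nonneg hs.2 fun t _ => hw0 t
    exact (ENNReal.ofReal_le_ofReal_iff hGnn).1 h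
  -- transport heq
  have hFv : ∀ s ∈ Set.Icc 0 L, (∫ c in s..L, v c) = F s := by
    intro s hs
    refine intervalIntegral.integral_congr fun t ht => ?_
    rw [Set.uIcc_of_le hs.2] at ht
    exact (hue t ⟨hs.1.trans ht.1, ht.2⟩).symm
  have hGr : ∀ s ∈ Set.Icc 0 L, (∫ c in s..L, ndRearr L v c) = G s := by
    intro s hs
    refine intervalIntegral.integral_congr fun t ht => ?_
    rw [Set.uIcc_of_le hs.2] at ht
    exact hndv_w t ⟨hs.1.trans ht.1, ht.2⟩
  have heq' : (∫ s in (0:ℝ)..L, F s) = ∫ s in (0:ℝ)..L, G s := by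
    have e1 : (∫ s in (0:ℝ)..L, F s) = ∫ s in (0:ℝ)..L, (∫ c in s..L, v c) :=
      intervalIntegral.integral_congr fun t ht => by
        rw [Set.uIcc_of_le hL.le] at ht; exact (hFv t ht).symm
    have e2 : (∫ s in (0:ℝ)..L, G s) = ∫ s in (0:ℝ)..L, (∫ c in s..L, ndRearr L v c) :=
      intervalIntegral.integral_congr fun t ht => by
        rw [Set.uIcc_of_le hL.le] at ht; exact (hGr t ht).symm
    rw [e1, e2]; exact heq
  -- continuity of F and G
  have hF_cont : Continuous F := by
    have : F = fun s => (∫ t in (0:ℝ)..L, u t) - ∫ t in (0:ℝ)..s, u t := by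
      funext s
      rw [hF_def]
      simp only
      rw [← intervalIntegral.integral_interval_sub_left (hu_int 0 L) (hu_int 0 s)]
    rw [this]
    exact continuous_const.sub (intervalIntegral.continuous_primitive hu_int 0)
  have hG_cont : Continuous G := by
    have : G = fun s => (∫ t in (0:ℝ)..L, w t) - ∫ t in (0:ℝ)..s, w t := by
      funext s
      rw [hG_def]
      simp only
      rw [← intervalIntegral.integral_interval_sub_left (hw_int 0 L) (hw_int 0 s)]
    rw [this]
    exact continuous_const.sub (intervalIntegral.continuous_primitive hw_int 0)
  -- F = G on [0, L]
  have hEqOn : Set.EqOn F G (Set.Icc 0 L) := by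
    refine Measure.eqOn_Icc_of_ae_eq volume hL.ne ?_ hF_cont.continuousOn
      hG_cont.continuousOn
    have hnn : 0 ≤ᵐ[volume.restrict (Set.Icc 0 L)] fun s => G s - F s :=
      (ae_restrict_iff' measurableSet_Icc).2
        (Filter.Eventually.of_forall fun s hs => sub_nonneg.2 (hFG s hs))
    have hint : MeasureTheory.IntegrableOn (fun s => G s - F s) (Set.Icc 0 L) :=
      (hG_cont.sub hF_cont).integrableOn_Icc
    have hzero : ∫ s in Set.Icc 0 L, (G s - F s) = 0 := by
      rw [MeasureTheory.integral_Icc_eq_integral_Ioc,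
        ← intervalIntegral.integral_of_le hL.le,
        intervalIntegral.integral_sub (hG_cont.intervalIntegrable 0 L)
          (hF_cont.intervalIntegrable 0 L), heq']
      ring
    have := (MeasureTheory.integral_eq_zero_iff_of_nonneg_ae hnn hint).1 hzero
    filter_upwards [this] with s hsub
    have : G s - F s = 0 := hsub
    linarith
  -- Part 1
  have part1 : ∀ s ∈ Set.Icc 0 L, (∫ c in s..L, v c) = ∫ c in s..L, ndRearr L v c := by
    intro s hs
    rw [hFv s hs, hGr s hs]
    exact hEqOn hs
  -- Part 2 : a.e. equality via differentiation at continuity points of w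
  have hD : {x : ℝ | ¬ContinuousAt w x}.Countable := hw_mono.countable_not_continuousAt
  have part2core : ∀ s ∈ Set.Ioo 0 L, ContinuousAt w s → u s = w s := by
    intro s hs hws
    have hsIcc : s ∈ Set.Icc 0 L := ⟨hs.1.le, hs.2.le⟩
    have hP : HasDerivAt (fun x => ∫ t in (0:ℝ)..x, u t) (u s) s :=
      intervalIntegral.integral_hasDerivAt_right (hu_int 0 s)
        hu.stronglyMeasurable.stronglyMeasurableAtFilter hu.continuousAt
    have hQ : HasDerivAt (fun x => ∫ t in (0:ℝ)..x, w t) (w s) s :=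
      intervalIntegral.integral_hasDerivAt_right (hw_int 0 s)
        hw_mono.measurable.stronglyMeasurable.stronglyMeasurableAtFilter hws
    have hPhi : HasDerivAt
        (fun x => (∫ t in (0:ℝ)..x, u t) - ∫ t in (0:ℝ)..x, w t) (u s - w s) s :=
      hP.sub hQ
    have hzero : (fun x => (∫ t in (0:ℝ)..x, u t) - ∫ t in (0:ℝ)..x, w t)
        =ᶠ[nhds s] fun _ => (0:ℝ) := by
      filter_upwards [isOpen_Ioo.mem_nhds hs] with x hx
      have hxIcc : x ∈ Set.Icc 0 L := ⟨hx.1.le, hx.2.le⟩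
      have e1 := intervalIntegral.integral_interval_sub_left (hu_int 0 L) (hu_int 0 x)
      have e2 := intervalIntegral.integral_interval_sub_left (hw_int 0 L) (hw_int 0 x)
      have h1 : (∫ t in (0:ℝ)..x, u t) = F 0 - F x := by
        rw [hF_def]; simp only; linarith [e1]
      have h2 : (∫ t in (0:ℝ)..x, w t) = G 0 - G x := by
        rw [hG_def]; simp only; linarith [e2]
      rw [h1, h2, hEqOn (Set.left_mem_Icc.2 hL.le), hEqOn hxIcc]
      ring
    have hPhi0 : HasDerivAt
        (fun x => (∫ t in (0:ℝ)..x, u t) - ∫ t in (0:ℝ)..x, w t) 0 s :=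
      (hasDerivAt_const s (0:ℝ)).congr_of_eventuallyEq hzero
    have := hPhi.unique hPhi0
    linarith
  have part2 : ∀ᵐ s ∂(MeasureTheory.volume.restrict (Set.Icc 0 L)),
      v s = ndRearr L v s := by
    have hae1 : ∀ᵐ s ∂(MeasureTheory.volume.restrict (Set.Icc 0 L)),
        s ∉ ({0, L} : Set ℝ) :=
      ae_restrict_of_ae (((Set.countable_singleton L).insert 0).ae_notMem _)
    have hae2 : ∀ᵐ s ∂(MeasureTheory.volume.restrict (Set.Icc 0 L)),
        s ∉ {x : ℝ | ¬ContinuousAt w x} :=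
      ae_restrict_of_ae (hD.ae_notMem _)
    filter_upwards [hae1, hae2, ae_restrict_mem measurableSet_Icc] with s hs1 hs2 hs3
    have hsIoo : s ∈ Set.Ioo 0 L := by
      simp only [Set.mem_insert_iff, Set.mem_singleton_iff, not_or] at hs1
      exact ⟨lt_of_le_of_ne hs3.1 (Ne.symm hs1.1), lt_of_le_of_ne hs3.2 hs1.2⟩
    have hcw : ContinuousAt w s := not_not.1 hs2
    have := part2core s hsIoo hcw
    rw [← hue s hs3, this, ← hndv_w s hs3]
  refine ⟨part1, part2, ⟨w, hw_mono.monotoneOn _, ?_⟩⟩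
  filter_upwards [part2, ae_restrict_mem measurableSet_Icc] with s h1 h2
  rw [h1, hndv_w s h2]
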